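/- arXiv:2511.07642 — 2 statements merged into one kernel-verified Lean document; each statement's English description precedes it below -/
import Mathlib

section
/- Let X be a compact metric space and f : X → 2^X a transitive open set-valued map. Then Ω(f) = Ω_final(f), and this set consists of exactly one equivalence class under the relation x ↭ y (x ⇝ y and y ⇝ x). -/
open Metric Set

/-- n-fold relational composition: `fIter f 0 x = {x}`, `fIter f (n+1) x = ⋃ y ∈ fIter f n x, f y`. -/
def fIter {X : Type*} (f : X → Set X) : ℕ → X → Set X
  | 0, x => {x}
  | n + 1, x => ⋃ y ∈ fIter f n x, f y

/-- Image of a set under the n-fold composition. -/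
def fIterS {X : Type*} (f : X → Set X) (n : ℕ) (A : Set X) : Set X :=
  ⋃ a ∈ A, fIter f n a

/-- `x ⇝ y`: there is a finite trajectory of length ≥ 1 from `x` to `y`. -/
def Reach {X : Type*} (f : X → Set X) (x y : X) : Prop :=
  ∃ n, 1 ≤ n ∧ y ∈ fIter f n x

/-- The recurrent set `Ω(f)`. -/
def Omega {X : Type*} (f : X → Set X) : Set X := {x | Reach f x x}

/-- The final recurrent set `Ω_final(f)`. -/
def OmegaFinal {X : Type*} (f : X → Set X) : Set X :=
  {x | ∀ y, Reach f x y → Reach f y x}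

/-- `f` is an open set-valued map: open graph and nonempty open connected values. -/
def IsOpenSVM {X : Type*} [TopologicalSpace X] (f : X → Set X) : Prop :=
  IsOpen {p : X × X | p.2 ∈ f p.1} ∧ ∀ x, IsOpen (f x) ∧ IsConnected (f x)

/-- `f` is transitive. -/
def SVMTransitive {X : Type*} [TopologicalSpace X] (f : X → Set X) : Prop :=
  ∀ A B : Set X, IsOpen A → A.Nonempty → IsOpen B → B.Nonempty →
    ∃ n, 1 ≤ n ∧ (fIterS f n A ∩ B).Nonempty

lemma fIter_comp {X : Type*} (f : X → Set X) {m n : ℕ} {x z y : X}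
    (hz : z ∈ fIter f m x) (hy : y ∈ fIter f n z) : y ∈ fIter f (m + n) x := by
  induction n generalizing y with
  | zero =>
    simp only [fIter, mem_singleton_iff] at hy
    subst hy; simpa using hz
  | succ n ih =>
    simp only [fIter, mem_iUnion] at hy
    obtain ⟨w, hw, hyw⟩ := hy
    show y ∈ fIter f (m + n + 1) x
    simp only [fIter, mem_iUnion]
    exact ⟨w, ih hw, hyw⟩

lemma reach_trans {X : Type*} (f : X → Set X) {x z y : X}
    (h1 : Reach f x z) (h2 : Reach f z y) : Reach f x y := by
  obtain ⟨m, hm, hz⟩ := h1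
  obtain ⟨n, hn, hy⟩ := h2
  exact ⟨m + n, by omega, fIter_comp f hz hy⟩

lemma pred_of_reach {X : Type*} (f : X → Set X) {x y : X}
    (h : Reach f x y) : ∃ w, y ∈ f w := by
  obtain ⟨n, hn, hy⟩ := h
  obtain ⟨k, rfl⟩ : ∃ k, n = k + 1 := ⟨n - 1, by omega⟩
  simp only [fIter, mem_iUnion] at hy
  obtain ⟨w, _, hw⟩ := hy
  exact ⟨w, hw⟩

lemma reach_of_pred {X : Type*} [TopologicalSpace X] (f : X → Set X)
    (hf : IsOpenSVM f) (htrans : SVMTransitive f) (x y : X)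
    (hy : ∃ w, y ∈ f w) : Reach f x y := by
  have hB : IsOpen {w | y ∈ f w} :=
    hf.1.preimage (continuous_id.prodMk continuous_const : Continuous fun w => (w, y))
  obtain ⟨n, hn, b, hb, hbB⟩ :=
    htrans (f x) {w | y ∈ f w} (hf.2 x).1 (hf.2 x).2.nonempty hB hy
  simp only [fIterS, mem_iUnion] at hb
  obtain ⟨a, ha, hba⟩ := hb
  have h1 : a ∈ fIter f 1 x := by simp [fIter]; exact ha
  have hb' : b ∈ fIter f (1 + n) x := fIter_comp f h1 hba
  have h2 : y ∈ fIter f 1 b := by simp [fIter]; exact hbB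
  exact ⟨1 + n + 1, by omega, fIter_comp f hb' h2⟩

theorem stmt_8 {X : Type*} [MetricSpace X] [CompactSpace X] (f : X → Set X)
    (hf : IsOpenSVM f) (htrans : SVMTransitive f) :
    Omega f = OmegaFinal f ∧
      ∀ x ∈ Omega f, ∀ y ∈ Omega f, Reach f x y ∧ Reach f y x := by
  have key : ∀ x y : X, y ∈ Omega f → Reach f x y := fun x y hy =>
    reach_of_pred f hf htrans x y (pred_of_reach f hy)
  constructor
  · ext x
    constructor
    · intro hx y _
      exact key y x hx
    · intro hx
      obtain ⟨z, hz⟩ := (hf.2 x).2.nonempty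
      have hxz : Reach f x z := ⟨1, le_refl 1, by simp [fIter]; exact hz⟩
      exact reach_trans f hxz (hx z hxz)
  · intro x hx y hy
    exact ⟨key x y hy, key y x hx⟩
end

section
/- Let X be a compact connected metric space and f : X → 2^X an open set-valued map. Then f is transitive if and only if f is topologically mixing, i.e., for all nonempty open sets A, B ⊆ X there exists n₀ such that fⁿ(A) ∩ B ≠ ∅ for all n ≥ n₀. -/
set_option linter.unusedSectionVars false
set_option linter.unusedVariables false


open Metric Set

section Aux

variable {X : Type*} [TopologicalSpace X] {f : X → Set X}

lemma mem_fIter_succ {n : ℕ} {x y : X} :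
    y ∈ fIter f (n+1) x ↔ ∃ z ∈ fIter f n x, y ∈ f z := by
  simp [fIter]

lemma fIter_one (x : X) : fIter f 1 x = f x := by
  simp [fIter]

lemma mem_fIter_add {m n : ℕ} {x z y : X}
    (hz : z ∈ fIter f m x) (hy : y ∈ fIter f n z) : y ∈ fIter f (m+n) x := by
  induction n generalizing y with
  | zero =>
    simp only [fIter, mem_singleton_iff] at hy
    subst hy; simpa using hz
  | succ n ih =>
    rw [mem_fIter_succ] at hy
    obtain ⟨w, hw, hyw⟩ := hy
    have : y ∈ fIter f ((m+n)+1) x := mem_fIter_succ.mpr ⟨w, ih hw, hyw⟩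
    simpa [Nat.add_assoc] using this

lemma fIter_nonempty (hne : ∀ x, (f x).Nonempty) (n : ℕ) (x : X) :
    (fIter f n x).Nonempty := by
  induction n generalizing x with
  | zero => exact ⟨x, rfl⟩
  | succ n ih =>
    obtain ⟨z, hz⟩ := ih x
    obtain ⟨y, hy⟩ := hne z
    exact ⟨y, mem_fIter_succ.mpr ⟨z, hz, hy⟩⟩

lemma isOpen_fIter (hop : ∀ x, IsOpen (f x)) (n : ℕ) (x : X) :
    IsOpen (fIter f (n+1) x) := by
  rw [show fIter f (n+1) x = ⋃ y ∈ fIter f n x, f y from rfl]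
  exact isOpen_biUnion fun y _ => hop y

lemma isOpen_graph_fIter (hg : IsOpen {p : X × X | p.2 ∈ f p.1}) (n : ℕ) :
    IsOpen {p : X × X | p.2 ∈ fIter f (n+1) p.1} := by
  induction n with
  | zero =>
    have : {p : X × X | p.2 ∈ fIter f 1 p.1} = {p : X × X | p.2 ∈ f p.1} := by
      ext p; simp [fIter_one]
    rw [this]; exact hg
  | succ n ih =>
    rw [isOpen_prod_iff]
    rintro x y hy
    obtain ⟨z, hz, hyz⟩ := mem_fIter_succ.mp hy
    obtain ⟨V, Z, hV, hZ, hxV, hzZ, hVZ⟩ := isOpen_prod_iff.mp ih x z hz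
    obtain ⟨Z', W, hZ', hW, hzZ', hyW, hZW⟩ := isOpen_prod_iff.mp hg z y hyz
    refine ⟨V, W, hV, hW, hxV, hyW, ?_⟩
    rintro ⟨x', y'⟩ ⟨hx', hy'⟩
    exact mem_fIter_succ.mpr ⟨z, hVZ (show (x', z) ∈ V ×ˢ Z from ⟨hx', hzZ⟩),
      hZW (show (z, y') ∈ Z' ×ˢ W from ⟨hzZ', hy'⟩)⟩

lemma mem_fIterS {n : ℕ} {A : Set X} {y : X} :
    y ∈ fIterS f n A ↔ ∃ a ∈ A, y ∈ fIter f n a := by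
  simp [fIterS]

lemma isOpen_fIterS (hop : ∀ x, IsOpen (f x)) (n : ℕ) (A : Set X) :
    IsOpen (fIterS f (n+1) A) :=
  isOpen_biUnion fun a _ => isOpen_fIter hop n a

end Aux
section Aux2

variable {X : Type*} [TopologicalSpace X] {f : X → Set X}

lemma isConnected_fIter (hf : IsOpenSVM f) (n : ℕ) (x : X) :
    IsConnected (fIter f (n+1) x) := by
  induction n with
  | zero => rw [fIter_one]; exact (hf.2 x).2
  | succ n ih =>
    have hne : (fIter f (n+2) x).Nonempty :=
      fIter_nonempty (fun y => (hf.2 y).2.1) _ x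
    refine ⟨hne, ?_⟩
    intro u v hu hv hsub ⟨zu, hzu⟩ ⟨zv, hzv⟩
    -- Ou, Ov
    set Ou : Set X := {y | (f y ∩ u).Nonempty} with hOu
    set Ov : Set X := {y | (f y ∩ v).Nonempty} with hOv
    have hOopen : ∀ w : Set X, IsOpen {y | (f y ∩ w).Nonempty} := by
      intro w
      rw [isOpen_iff_forall_mem_open]
      rintro y ⟨z, hzf, hzw⟩
      obtain ⟨V, W, hV, hW, hyV, hzW, hVW⟩ := isOpen_prod_iff.mp hf.1 y z hzf
      exact ⟨V, fun y' hy' => ⟨z, hVW (show (y', z) ∈ V ×ˢ W from ⟨hy', hzW⟩), hzw⟩,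
        hV, hyV⟩
    have hmem : ∀ {y : X}, y ∈ fIter f (n+1) x → f y ⊆ fIter f (n+2) x := by
      intro y hy z hz
      exact mem_fIter_succ.mpr ⟨y, hy, hz⟩
    have hCsub : fIter f (n+1) x ⊆ Ou ∪ Ov := by
      intro y hy
      obtain ⟨z, hz⟩ := (hf.2 y).2.1
      rcases hsub (hmem hy hz) with h | h
      · exact Or.inl ⟨z, hz, h⟩
      · exact Or.inr ⟨z, hz, h⟩
    have hCu : (fIter f (n+1) x ∩ Ou).Nonempty := by
      obtain ⟨hz1, hz2⟩ := hzu
      obtain ⟨y, hy, hzy⟩ := mem_fIter_succ.mp hz1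
      exact ⟨y, hy, ⟨zu, hzy, hz2⟩⟩
    have hCv : (fIter f (n+1) x ∩ Ov).Nonempty := by
      obtain ⟨hz1, hz2⟩ := hzv
      obtain ⟨y, hy, hzy⟩ := mem_fIter_succ.mp hz1
      exact ⟨y, hy, ⟨zv, hzy, hz2⟩⟩
    obtain ⟨y, hyC, hyu, hyv⟩ := ih.2 Ou Ov (hOopen u) (hOopen v) hCsub hCu hCv
    have hfy := (hf.2 y).2.2
    obtain ⟨w, hwf, hwuv⟩ := hfy u v hu hv (fun z hz => hsub (hmem hyC hz)) hyu hyv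
    exact ⟨w, hmem hyC hwf, hwuv⟩

lemma fIterS_isConnected_pieces : True := trivial

/-- robustification of two periods -/
lemma robust2 (hg : IsOpen {p : X × X | p.2 ∈ f p.1}) {x : X} {m₁ m₂ : ℕ}
    (h1 : 1 ≤ m₁) (h2 : 1 ≤ m₂)
    (hx1 : x ∈ fIter f m₁ x) (hx2 : x ∈ fIter f m₂ x) :
    ∃ U : Set X, IsOpen U ∧ x ∈ U ∧
      ∀ u ∈ U, ∀ u' ∈ U, u' ∈ fIter f m₁ u ∧ u' ∈ fIter f m₂ u := by
  obtain ⟨k₁, rfl⟩ := Nat.exists_eq_add_of_le h1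
  obtain ⟨k₂, rfl⟩ := Nat.exists_eq_add_of_le h2
  have g1 := isOpen_graph_fIter hg k₁
  have g2 := isOpen_graph_fIter hg k₂
  obtain ⟨V₁, W₁, hV₁, hW₁, hx11, hx12, hsub1⟩ := isOpen_prod_iff.mp
    (by simpa [Nat.add_comm] using g1) x x (by simpa [Nat.add_comm] using hx1)
  obtain ⟨V₂, W₂, hV₂, hW₂, hx21, hx22, hsub2⟩ := isOpen_prod_iff.mp
    (by simpa [Nat.add_comm] using g2) x x (by simpa [Nat.add_comm] using hx2)
  refine ⟨V₁ ∩ W₁ ∩ (V₂ ∩ W₂), by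
      exact ((hV₁.inter hW₁).inter (hV₂.inter hW₂)),
    ⟨⟨hx11, hx12⟩, hx21, hx22⟩, ?_⟩
  rintro u ⟨⟨hu1, _⟩, hu2, _⟩ u' ⟨⟨_, hu1'⟩, _, hu2'⟩
  constructor
  · have := hsub1 (show (u, u') ∈ V₁ ×ˢ W₁ from ⟨hu1, hu1'⟩)
    simpa [Nat.add_comm] using this
  · have := hsub2 (show (u, u') ∈ V₂ ×ˢ W₂ from ⟨hu2, hu2'⟩)
    simpa [Nat.add_comm] using this

end Aux2
section Aux3

variable {X : Type*} [TopologicalSpace X] {f : X → Set X}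

lemma trans_pt (ht : SVMTransitive f) {A B : Set X} (hA : IsOpen A)
    (hAne : A.Nonempty) (hB : IsOpen B) (hBne : B.Nonempty) :
    ∃ n, 1 ≤ n ∧ ∃ a ∈ A, ∃ b ∈ B, b ∈ fIter f n a := by
  obtain ⟨n, hn, b, hb1, hb2⟩ := ht A B hA hAne hB hBne
  obtain ⟨a, ha, hba⟩ := mem_fIterS.mp hb1
  exact ⟨n, hn, a, ha, b, hb2, hba⟩

lemma trans_unbounded (hf : IsOpenSVM f) (ht : SVMTransitive f) {A B : Set X}
    (hA : IsOpen A) (hAne : A.Nonempty) (hB : IsOpen B) (hBne : B.Nonempty) (N : ℕ) :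
    ∃ n, N ≤ n ∧ 1 ≤ n ∧ ∃ a ∈ A, ∃ b ∈ B, b ∈ fIter f n a := by
  induction N with
  | zero =>
    obtain ⟨n, hn, h⟩ := trans_pt ht hA hAne hB hBne
    exact ⟨n, Nat.zero_le _, hn, h⟩
  | succ N ih =>
    obtain ⟨n, hNn, hn1, a, ha, b, hb, hba⟩ := ih
    obtain ⟨k, rfl⟩ := Nat.exists_eq_add_of_le hn1
    have hC : IsOpen (fIter f (1+k) a ∩ B) := by
      have := isOpen_fIter (fun y => (hf.2 y).1) k a
      simpa [Nat.add_comm] using this.inter hB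
    obtain ⟨m, hm1, c, hc, b', hb', hb'c⟩ :=
      trans_pt ht hC ⟨b, hba, hb⟩ hB hBne
    exact ⟨1+k+m, by omega, by omega, a, ha, b', hb', mem_fIter_add hc.1 hb'c⟩

lemma exists_periodic (hf : IsOpenSVM f) (ht : SVMTransitive f) [Nonempty X] :
    ∃ x n, 1 ≤ n ∧ x ∈ fIter f n x := by
  obtain ⟨n₁, hn₁, a₁, _, b₁, _, hb₁⟩ := trans_pt ht isOpen_univ univ_nonempty
    isOpen_univ univ_nonempty (A := (univ : Set X)) (B := univ)
  obtain ⟨k, rfl⟩ := Nat.exists_eq_add_of_le hn₁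
  obtain ⟨V, W, hV, hW, haV, hbW, hVW⟩ := isOpen_prod_iff.mp
    (by simpa [Nat.add_comm] using isOpen_graph_fIter hf.1 k) a₁ b₁
    (by simpa [Nat.add_comm] using hb₁)
  obtain ⟨n₂, hn₂, a₂, ha₂, b₂, hb₂, hba₂⟩ := trans_pt ht hW ⟨b₁, hbW⟩ hV ⟨a₁, haV⟩
  have ha₂b₂ : a₂ ∈ fIter f (1+k) b₂ := by
    have := hVW (show (b₂, a₂) ∈ V ×ˢ W from ⟨hb₂, ha₂⟩)
    simpa [Nat.add_comm] using this
  exact ⟨b₂, 1+k+n₂, by omega, mem_fIter_add ha₂b₂ hba₂⟩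

lemma pow_period {x : X} {m : ℕ} (hx : x ∈ fIter f m x) (s : ℕ) :
    x ∈ fIter f (s*m) x := by
  induction s with
  | zero => simp [fIter]
  | succ s ih =>
    have := mem_fIter_add ih hx
    simpa [Nat.succ_mul] using this

end Aux3
section NT

lemma nt_main (p g T : ℕ) (hp : 1 ≤ p) (hg : 1 ≤ g) :
    ∃ K, ∀ k, K ≤ k → ∃ s t, T ≤ t ∧ k * Nat.gcd p g = s * p + t * g := by
  set d := Nat.gcd p g with hd
  have hdpos : 0 < d := Nat.gcd_pos_of_pos_left g hp
  set p' := p / d with hp'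
  set g' := g / d with hg'
  have hpm : d * p' = p := Nat.mul_div_cancel' (Nat.gcd_dvd_left p g)
  have hgm : d * g' = g := Nat.mul_div_cancel' (Nat.gcd_dvd_right p g)
  have hco : Nat.Coprime p' g' := Nat.coprime_div_gcd_div_gcd hdpos
  have hg'pos : 0 < g' := by
    rcases Nat.eq_zero_or_pos g' with h | h
    · rw [h, mul_zero] at hgm; omega
    · exact h
  have hp'pos : 0 < p' := by
    rcases Nat.eq_zero_or_pos p' with h | h
    · rw [h, mul_zero] at hpm; omega
    · exact h
  haveI : NeZero g' := ⟨by omega⟩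
  refine ⟨p' * g' + T * g', fun k hk => ?_⟩
  set u : (ZMod g')ˣ := ZMod.unitOfCoprime p' hco with hu
  set s := (((k : ZMod g')) * ((u⁻¹ : (ZMod g')ˣ) : ZMod g')).val with hs
  have hslt : s < g' := ZMod.val_lt _
  have hle : s * p' ≤ k := by
    have : s * p' ≤ (g' - 1) * p' := Nat.mul_le_mul_right _ (by omega)
    have h2 : (g' - 1) * p' < g' * p' := by
      apply Nat.mul_lt_mul_of_lt_of_le (by omega) le_rfl hp'pos
    nlinarith [Nat.mul_comm p' g']
  have hcast : ((s * p' : ℕ) : ZMod g') = (k : ZMod g') := by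
    push_cast
    rw [hs, ZMod.natCast_val, ZMod.cast_id]
    have hup : ((u : ZMod g')) = (p' : ZMod g') := ZMod.coe_unitOfCoprime p' hco
    rw [← hup, mul_assoc, ← Units.val_mul]
    simp
  have hdvd : g' ∣ (k - s * p') := by
    have h0 : ((k - s * p' : ℕ) : ZMod g') = 0 := by
      rw [Nat.cast_sub hle, hcast, sub_self]
    exact (ZMod.natCast_eq_zero_iff _ _).mp h0
  set t := (k - s * p') / g' with ht
  have htg : t * g' = k - s * p' := Nat.div_mul_cancel hdvd
  have hkeq : s * p' + t * g' = k := by omega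
  have hT : T ≤ t := by
    have h1 : T * g' ≤ k - s * p' := by nlinarith [hslt, hle, hk]
    have := Nat.le_div_iff_mul_le hg'pos |>.mpr h1
    exact this
  refine ⟨s, t, hT, ?_⟩
  calc k * d = (s * p' + t * g') * d := by rw [hkeq]
    _ = s * (d * p') + t * (d * g') := by ring
    _ = s * p + t * g := by rw [hpm, hgm]

end NT
section Absorb

variable {X : Type*} [TopologicalSpace X] {f : X → Set X}

lemma absorb {U : Set X} {K g : ℕ} (hK : 1 ≤ K) (hg : 1 ≤ g)
    (hU : ∀ u ∈ U, ∀ u' ∈ U, u' ∈ fIter f (K*g) u ∧ u' ∈ fIter f ((K+1)*g) u) :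
    ∃ K₂, 1 ≤ K₂ ∧ ∀ k, K₂ ≤ k → ∀ u ∈ U, ∀ u' ∈ U, u' ∈ fIter f (k*g) u := by
  have chain : ∀ s t : ℕ, 1 ≤ t → ∀ u ∈ U, ∀ u' ∈ U,
      u' ∈ fIter f (s*(K*g) + t*((K+1)*g)) u := by
    intro s
    induction s with
    | zero =>
      intro t ht
      induction t with
      | zero => omega
      | succ t iht =>
        intro u hu u' hu'
        rcases Nat.eq_zero_or_pos t with rfl | htpos
        · simpa using (hU u hu u' hu').2
        · have h1 := (hU u hu u hu).2
          have h2 := iht htpos u hu u' hu'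
          have := mem_fIter_add h1 h2
          have hidx : (K+1)*g + (0*(K*g) + t*((K+1)*g))
              = 0*(K*g) + (t+1)*((K+1)*g) := by ring
          rwa [hidx] at this
    | succ s ihs =>
      intro t ht u hu u' hu'
      have h1 := (hU u hu u hu).1
      have h2 := ihs t ht u hu u' hu'
      have := mem_fIter_add h1 h2
      have hidx : K*g + (s*(K*g) + t*((K+1)*g))
          = (s+1)*(K*g) + t*((K+1)*g) := by ring
      rwa [hidx] at this
  have hco : Nat.gcd K (K+1) = 1 := by rw [Nat.gcd_self_add_right]; exact Nat.gcd_one_right K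
  obtain ⟨K₀, hK₀⟩ := nt_main K (K+1) 1 hK (by omega)
  refine ⟨max K₀ 1, le_max_right _ _, fun k hk u hu u' hu' => ?_⟩
  obtain ⟨s, t, ht, hst⟩ := hK₀ k (le_trans (le_max_left _ _) hk)
  rw [hco, mul_one] at hst
  have := chain s t ht u hu u' hu'
  have hidx : s*(K*g) + t*((K+1)*g) = k*g := by subst hst; ring
  rwa [hidx] at this

end Absorb
section Main

variable {X : Type*} [TopologicalSpace X] {f : X → Set X}

lemma main_descent [ConnectedSpace X] (hf : IsOpenSVM f) (ht : SVMTransitive f)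
    {g : ℕ} (hg2 : 2 ≤ g) {x : X} {K : ℕ} (hK : 1 ≤ K)
    (hper : ∀ k, K ≤ k → x ∈ fIter f (k*g) x) :
    ∃ d, 1 ≤ d ∧ d < g ∧ ∃ v K', 1 ≤ K' ∧ ∀ k, K' ≤ k → v ∈ fIter f (k*d) v := by
  have hgpos : 1 ≤ g := by omega
  have hne : ∀ y : X, (f y).Nonempty := fun y => (hf.2 y).2.1
  have hop : ∀ y : X, IsOpen (f y) := fun y => (hf.2 y).1
  obtain ⟨U, hUopen, hxU, hU2⟩ := robust2 hf.1
    (Nat.mul_pos hK hgpos) (Nat.mul_pos (by omega) hgpos)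
    (hper K le_rfl) (hper (K+1) (by omega))
  obtain ⟨K₂, hK₂1, habs⟩ := absorb hK hgpos hU2
  set Y : ℕ → Set X := fun j =>
    ⋃₀ {S | ∃ k u, K₂ ≤ k ∧ u ∈ U ∧ S = fIter f (k*g+j) u} with hY
  have mem_Y : ∀ {j z}, z ∈ Y j ↔ ∃ k u, K₂ ≤ k ∧ u ∈ U ∧ z ∈ fIter f (k*g+j) u := by
    intro j z
    simp only [hY, mem_sUnion, mem_setOf_eq]
    constructor
    · rintro ⟨S, ⟨k, u, hk, hu, rfl⟩, hz⟩
      exact ⟨k, u, hk, hu, hz⟩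
    · rintro ⟨k, u, hk, hu, hz⟩
      exact ⟨_, ⟨k, u, hk, hu, rfl⟩, hz⟩
  have hposidx : ∀ (k j : ℕ), K₂ ≤ k → ∃ m, k*g+j = m+1 := by
    intro k j hk; refine ⟨k*g+j-1, ?_⟩
    have : 1 ≤ k*g := by nlinarith
    omega
  have hYopen : ∀ j, IsOpen (Y j) := by
    intro j
    apply isOpen_sUnion
    rintro S ⟨k, u, hk, hu, rfl⟩
    obtain ⟨m, hm⟩ := hposidx k j hk
    rw [hm]; exact isOpen_fIter hop m u
  have hYne : ∀ j, (Y j).Nonempty := by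
    intro j
    obtain ⟨p, hp⟩ := fIter_nonempty hne (K₂*g+j) x
    exact ⟨p, mem_Y.mpr ⟨K₂, x, le_rfl, hxU, hp⟩⟩
  have hYconn : ∀ j, IsPreconnected (Y j) := by
    intro j
    obtain ⟨p, hp⟩ := fIter_nonempty hne j x
    apply isPreconnected_sUnion p
    · rintro S ⟨k, u, hk, hu, rfl⟩
      exact mem_fIter_add (habs k hk u hu x hxU) hp
    · rintro S ⟨k, u, hk, hu, rfl⟩
      obtain ⟨m, hm⟩ := hposidx k j hk
      rw [hm]; exact (isConnected_fIter hf m u).2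
  -- one-step image
  have himage : ∀ j, j < g → ∀ z ∈ Y j, ∀ w ∈ f z, w ∈ Y ((j+1) % g) := by
    intro j hj z hz w hw
    obtain ⟨k, u, hk, hu, hzk⟩ := mem_Y.mp hz
    have hw' : w ∈ fIter f (k*g+j+1) u :=
      mem_fIter_succ.mpr ⟨z, hzk, hw⟩
    rcases Nat.lt_or_ge (j+1) g with hlt | hge
    · rw [Nat.mod_eq_of_lt hlt]
      exact mem_Y.mpr ⟨k, u, hk, hu, by rwa [← Nat.add_assoc]⟩
    · have hjg : j + 1 = g := by omega
      rw [hjg, Nat.mod_self]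
      refine mem_Y.mpr ⟨k+1, u, by omega, hu, ?_⟩
      have : k*g+j+1 = (k+1)*g+0 := by rw [← hjg]; ring
      rwa [this] at hw'
  -- density of the union of the pieces
  have hUne : U.Nonempty := ⟨x, hxU⟩
  have hdense : ∀ B : Set X, IsOpen B → B.Nonempty → ∃ j, j < g ∧ (Y j ∩ B).Nonempty := by
    intro B hB hBne
    obtain ⟨n, hNn, hn1, u, hu, b, hb, hbn⟩ :=
      trans_unbounded hf ht hUopen hUne hB hBne (K₂*g)
    refine ⟨n % g, Nat.mod_lt _ (by omega), b, ?_, hb⟩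
    have hdiv : K₂ ≤ n / g := (Nat.le_div_iff_mul_le (by omega)).mpr hNn
    have heq : (n/g)*g + n%g = n := by
      rw [Nat.mul_comm]; exact Nat.div_add_mod n g
    exact mem_Y.mpr ⟨n/g, u, hdiv, hu, by rwa [heq]⟩
  -- two distinct pieces overlap
  have hoverlap : ∃ i j, i < g ∧ j < g ∧ i ≠ j ∧ (Y i ∩ Y j).Nonempty := by
    by_contra hO
    push_neg at hO
    -- the closures of two distinct pieces intersect
    have hclos : ∃ i j z, i < g ∧ j < g ∧ i ≠ j ∧
        z ∈ closure (Y i) ∧ z ∈ closure (Y j) := by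
      by_contra hcd
      push_neg at hcd
      have hcover : (⋃ j ∈ Finset.range g, closure (Y j)) = univ := by
        by_contra hcu
        have hcl : IsClosed (⋃ j ∈ Finset.range g, closure (Y j)) :=
          isClosed_biUnion_finset (fun j _ => isClosed_closure)
        have hcne : ((⋃ j ∈ Finset.range g, closure (Y j))ᶜ : Set X).Nonempty :=
          Set.nonempty_compl.mpr hcu
        obtain ⟨j, hj, z, hz1, hz2⟩ := hdense _ hcl.isOpen_compl hcne
        exact hz2 (mem_biUnion (Finset.mem_range.mpr hj) (subset_closure hz1))
      -- A := closure (Y 0) is clopen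
      have hsplit : closure (Y 0) = (⋃ j ∈ Finset.Ico 1 g, closure (Y j))ᶜ := by
        apply Subset.antisymm
        · intro z hz
          simp only [mem_compl_iff, mem_iUnion, not_exists]
          rintro j hj hzj
          exact hcd 0 j z (by omega) (by
            simp only [Finset.mem_Ico] at hj; omega) (by
            simp only [Finset.mem_Ico] at hj; omega) hz hzj
        · intro z hz
          have : z ∈ ⋃ j ∈ Finset.range g, closure (Y j) := hcover ▸ mem_univ z
          simp only [mem_iUnion, Finset.mem_range] at this
          obtain ⟨j, hj, hzj⟩ := this
          rcases Nat.eq_zero_or_pos j with rfl | hjpos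
          · exact hzj
          · exact absurd hzj (by
              simp only [mem_compl_iff, mem_iUnion, not_exists] at hz
              exact hz j (Finset.mem_Ico.mpr ⟨hjpos, hj⟩))
      have hclopen : IsClopen (closure (Y 0)) := by
        constructor
        · exact isClosed_closure
        · rw [hsplit]
          exact (isClosed_biUnion_finset
            (fun (j : ℕ) (_ : j ∈ Finset.Ico 1 g) => isClosed_closure)).isOpen_compl
      rcases isClopen_iff.mp hclopen with h | h
      · exact absurd (subset_closure (hYne 0).choose_spec)
          (by rw [h]; exact notMem_empty _)
      · -- closure (Y 0) = univ, but Y 1 is nonempty and disjoint from closure Y 0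
        obtain ⟨z1, hz1⟩ := hYne 1
        have hz1c : z1 ∈ closure (Y 0) := h ▸ mem_univ z1
        exact hcd 0 1 z1 (by omega) (by omega) (by omega) hz1c (subset_closure hz1)
    obtain ⟨i, j, z, hi, hj, hij, hzi, hzj⟩ := hclos
    -- push forward one step to get an actual intersection
    obtain ⟨w, hw⟩ := hne z
    obtain ⟨V, W, hV, hW, hzV, hwW, hVW⟩ := isOpen_prod_iff.mp hf.1 z w hw
    obtain ⟨yi, hyiV, hyiY⟩ := mem_closure_iff.mp hzi V hV hzV
    obtain ⟨yj, hyjV, hyjY⟩ := mem_closure_iff.mp hzj V hV hzV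
    have hwi : w ∈ Y ((i+1) % g) :=
      himage i hi yi hyiY w (hVW (show (yi, w) ∈ V ×ˢ W from ⟨hyiV, hwW⟩))
    have hwj : w ∈ Y ((j+1) % g) :=
      himage j hj yj hyjY w (hVW (show (yj, w) ∈ V ×ˢ W from ⟨hyjV, hwW⟩))
    have hmodne : (i+1) % g ≠ (j+1) % g := by
      rcases Nat.lt_or_ge (i+1) g with h1 | h1 <;>
        rcases Nat.lt_or_ge (j+1) g with h2 | h2
      · rw [Nat.mod_eq_of_lt h1, Nat.mod_eq_of_lt h2]; omega
      · have : j + 1 = g := by omega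
        rw [Nat.mod_eq_of_lt h1, this, Nat.mod_self]; omega
      · have : i + 1 = g := by omega
        rw [this, Nat.mod_self, Nat.mod_eq_of_lt h2]; omega
      · omega
    exact Set.eq_empty_iff_forall_notMem.mp
      (hO ((i+1) % g) ((j+1) % g) (Nat.mod_lt _ (by omega))
        (Nat.mod_lt _ (by omega)) hmodne) w ⟨hwi, hwj⟩
  -- use the overlap to descend
  obtain ⟨i, j, hi, hj, hij, z, hzi, hzj⟩ := hoverlap
  obtain ⟨a₁, u, ha₁, hu, hz1⟩ := mem_Y.mp hzi
  obtain ⟨b₁, u', hb₁, hu', hz2⟩ := mem_Y.mp hzj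
  have hWopen : IsOpen (fIter f (a₁*g+i) u ∩ fIter f (b₁*g+j) u') := by
    obtain ⟨m1, hm1⟩ := hposidx a₁ i ha₁
    obtain ⟨m2, hm2⟩ := hposidx b₁ j hb₁
    rw [hm1, hm2]
    exact (isOpen_fIter hop m1 u).inter (isOpen_fIter hop m2 u')
  obtain ⟨t, ht1, w, hwW₀, v, hvU, hvw⟩ :=
    trans_pt ht hWopen ⟨z, hz1, hz2⟩ hUopen hUne
  have hp₁ : v ∈ fIter f (K₂*g + (a₁*g+i) + t) v :=
    mem_fIter_add (mem_fIter_add (habs K₂ le_rfl v hvU u hu) hwW₀.1) hvw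
  have hp₂ : v ∈ fIter f (K₂*g + (b₁*g+j) + t) v :=
    mem_fIter_add (mem_fIter_add (habs K₂ le_rfl v hvU u' hu') hwW₀.2) hvw
  set p₁ := K₂*g + (a₁*g+i) + t with hp₁def
  set p₂ := K₂*g + (b₁*g+j) + t with hp₂def
  have hres1 : p₁ % g = (i+t) % g := by
    have : p₁ = (i+t) + (K₂+a₁)*g := by rw [hp₁def]; ring
    rw [this, Nat.add_mul_mod_self_right]
  have hres2 : p₂ % g = (j+t) % g := by
    have : p₂ = (j+t) + (K₂+b₁)*g := by rw [hp₂def]; ring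
    rw [this, Nat.add_mul_mod_self_right]
  have hresne : p₁ % g ≠ p₂ % g := by
    rw [hres1, hres2]
    intro h
    have : i % g = j % g := Nat.ModEq.add_right_cancel' t h
    rw [Nat.mod_eq_of_lt hi, Nat.mod_eq_of_lt hj] at this
    exact hij this
  -- pick the period that is not divisible by g
  have hmain : ∃ p, v ∈ fIter f p v ∧ ¬ (g ∣ p) ∧ 1 ≤ p := by
    rcases Nat.eq_zero_or_pos (p₁ % g) with h1 | h1
    · refine ⟨p₂, hp₂, fun hdvd => ?_, by omega⟩
      obtain ⟨c, hc⟩ := hdvd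
      have h2 : p₂ % g = 0 := by rw [hc]; exact Nat.mul_mod_right g c
      omega
    · refine ⟨p₁, hp₁, fun hdvd => ?_, by omega⟩
      obtain ⟨c, hc⟩ := hdvd
      have h2 : p₁ % g = 0 := by rw [hc]; exact Nat.mul_mod_right g c
      omega
  obtain ⟨p, hvp, hgnd, hppos⟩ := hmain
  set d := Nat.gcd p g with hd
  have hd1 : 1 ≤ d := Nat.gcd_pos_of_pos_right _ (by omega)
  have hdltg : d < g := by
    have hdg : d ∣ g := Nat.gcd_dvd_right p g
    have hdp : d ∣ p := Nat.gcd_dvd_left p g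
    have : d ≠ g := fun h => hgnd (h ▸ hdp)
    exact lt_of_le_of_ne (Nat.le_of_dvd (by omega) hdg) this
  obtain ⟨K₀, hK₀⟩ := nt_main p g K₂ hppos hgpos
  refine ⟨d, hd1, hdltg, v, max K₀ 1, le_max_right _ _, fun k hk => ?_⟩
  obtain ⟨s, t', ht', hst⟩ := hK₀ k (le_trans (le_max_left _ _) hk)
  have h1 : v ∈ fIter f (s*p) v := pow_period hvp s
  have h2 : v ∈ fIter f (t'*g) v := habs t' ht' v hvU v hvU
  have := mem_fIter_add h1 h2
  rw [← hst] at this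
  exact this

end Main
section Final

variable {X : Type*} [TopologicalSpace X] {f : X → Set X}

lemma exists_absorbing [ConnectedSpace X] (hf : IsOpenSVM f) (ht : SVMTransitive f) :
    ∃ x K, 1 ≤ K ∧ ∀ k, K ≤ k → x ∈ fIter f k x := by
  haveI : Nonempty X := inferInstance
  set Sset : Set ℕ :=
    {d | 1 ≤ d ∧ ∃ x K, 1 ≤ K ∧ ∀ k, K ≤ k → x ∈ fIter f (k*d) x} with hS
  have hSne : Sset.Nonempty := by
    obtain ⟨x, n, hn, hx⟩ := exists_periodic hf ht
    exact ⟨n, hn, x, 1, le_rfl, fun k _ => pow_period hx k⟩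
  set g := sInf Sset with hg
  have hgmem : g ∈ Sset := Nat.sInf_mem hSne
  obtain ⟨hg1, x, K, hK, hper⟩ := hgmem
  rcases Nat.lt_or_ge g 2 with hglt | hgge
  · have hgeq : g = 1 := by omega
    refine ⟨x, K, hK, fun k hk => ?_⟩
    have h := hper k hk
    rwa [hgeq, Nat.mul_one] at h
  · obtain ⟨d, hd1, hdg, v, K', hK', hvper⟩ := main_descent hf ht hgge hK hper
    have : d ∈ Sset := ⟨hd1, v, K', hK', hvper⟩
    have := Nat.sInf_le this
    omega

theorem transitive_implies_mixing [ConnectedSpace X] (hf : IsOpenSVM f)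
    (ht : SVMTransitive f) (A B : Set X) (hA : IsOpen A) (hAne : A.Nonempty)
    (hB : IsOpen B) (hBne : B.Nonempty) :
    ∃ n₀, ∀ n ≥ n₀, (fIterS f n A ∩ B).Nonempty := by
  obtain ⟨x, K, hK, habs0⟩ := exists_absorbing hf ht
  obtain ⟨U, hUopen, hxU, hU2⟩ := robust2 hf.1
    (show 1 ≤ K*1 by omega) (show 1 ≤ (K+1)*1 by omega)
    (by simpa using habs0 K le_rfl) (by simpa using habs0 (K+1) (by omega))
  obtain ⟨K₂, hK₂1, habs⟩ := absorb hK le_rfl hU2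
  have habs' : ∀ m, K₂ ≤ m → ∀ u ∈ U, ∀ u' ∈ U, u' ∈ fIter f m u := by
    intro m hm u hu u' hu'
    simpa using habs m hm u hu u' hu'
  have hUne : U.Nonempty := ⟨x, hxU⟩
  obtain ⟨n₁, hn₁, a, ha, w, hwU, hwa⟩ := trans_pt ht hA hAne hUopen hUne
  obtain ⟨n₂, hn₂, u₂, hu₂, b₀, hb₀, hb₀u₂⟩ := trans_pt ht hUopen hUne hB hBne
  refine ⟨n₁ + K₂ + n₂, fun n hn => ?_⟩
  have hm : K₂ ≤ n - n₁ - n₂ := by omega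
  have h1 : u₂ ∈ fIter f (n - n₁ - n₂) w := habs' _ hm w hwU u₂ hu₂
  have h2 : b₀ ∈ fIter f (n₁ + (n - n₁ - n₂) + n₂) a :=
    mem_fIter_add (mem_fIter_add hwa h1) hb₀u₂
  have hidx : n₁ + (n - n₁ - n₂) + n₂ = n := by omega
  rw [hidx] at h2
  exact ⟨b₀, mem_fIterS.mpr ⟨a, ha, h2⟩, hb₀⟩

end Final


theorem stmt_13 {X : Type*} [MetricSpace X] [CompactSpace X] [ConnectedSpace X]
    (f : X → Set X) (hf : IsOpenSVM f) :
    SVMTransitive f ↔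
      (∀ A B : Set X, IsOpen A → A.Nonempty → IsOpen B → B.Nonempty →
        ∃ n₀, ∀ n ≥ n₀, (fIterS f n A ∩ B).Nonempty) := by
  constructor
  · intro ht A B hA hAne hB hBne
    exact transitive_implies_mixing hf ht A B hA hAne hB hBne
  · intro hmix A B hA hAne hB hBne
    obtain ⟨n₀, h⟩ := hmix A B hA hAne hB hBne
    exact ⟨max n₀ 1, le_max_right _ _, h _ (le_max_left _ _)⟩
end
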